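/- Let X and Y be compact metric spaces and G the free semigroup action on X generated by {f_y}_{y∈Y}. If G has the gluing orbit property, then the skew product F : Y^ℕ × X → Y^ℕ × X, F(ω,x) = (σω, f_{ω_1} x), has the gluing orbit property (as a single continuous map) with respect to the metric D((ω,x),(ω',x')) = max{d'(ω,ω'), d(x,x')}, where d'(ω,ω') = Σ_{j≥1} 2^{-j} d_Y(ω_j, ω'_j). -/

import Mathlib

open Metric

variable {X Y : Type*}

/-- For a word `w = [i₁, …, i_k]`, `fw f w = f_{i₁} ∘ ⋯ ∘ f_{i_k}`. -/
def fw (f : Y → X → X) : List Y → X → X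
  | [] => id
  | y :: w => fun x => f y (fw f w x)

/-- Bowen metric of the word `w = i₁ ⋯ i_n`:
`d_w(x,y) = max_{0 ≤ j ≤ n} d(f_{i_j ⋯ i_1} x, f_{i_j ⋯ i_1} y)`, i.e. the maximum of
`d(f_{w'} x, f_{w'} y)` over the words `w' ≤ w̄` (the reverses of initial segments of `w`). -/
noncomputable def dB [PseudoMetricSpace X] (f : Y → X → X) (w : List Y) (x y : X) : ℝ :=
  ((w.inits.map fun u => dist (fw f u.reverse x) (fw f u.reverse y))).foldr max 0

/-- The `(w,ε)`-Bowen ball at `x`. -/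
def BB [PseudoMetricSpace X] (f : Y → X → X) (w : List Y) (x : X) (ε : ℝ) : Set X :=
  {z | dB f w x z < ε}

/-- The skew product `F(ω, x) = (σω, f_{ω₁}(x))` on `Y^ℕ × X`. -/
def skew (f : Y → X → X) : (ℕ → Y) × X → (ℕ → Y) × X :=
  fun p => (fun n => p.1 (n + 1), f (p.1 0) p.2)

/-- The cumulative word `w_{(n_1)} w_{(p_1)} ⋯ w_{(n_j)} w_{(p_j)}` (in orbit order):
its reverse is `\overline{w_{(p_j)}} \overline{w_{(n_j)}} ⋯ \overline{w_{(p_1)}} \overline{w_{(n_1)}}`. -/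
def Wcum (wn wp : ℕ → List Y) (j : ℕ) : List Y :=
  ((List.range j).map fun i => wn i ++ wp i).flatten

/-- The metric `d'(ω, ω') = Σ_{j ≥ 1} 2^{-j} d_Y(ω_j, ω'_j)` on `Y^ℕ` (indexing from 0). -/
noncomputable def dseq [PseudoMetricSpace Y] (ω ω' : ℕ → Y) : ℝ :=
  ∑' j : ℕ, dist (ω j) (ω' j) / 2 ^ (j + 1)

/-- The product metric `D = max{d', d}` on `Y^ℕ × X`. -/
noncomputable def Dprod [PseudoMetricSpace X] [PseudoMetricSpace Y]
    (p q : (ℕ → Y) × X) : ℝ :=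
  max (dseq p.1 q.1) (dist p.2 q.2)

-- Auxiliary lemmas
lemma fw_append (f : Y → X → X) : ∀ (a b : List Y) (x : X),
    fw f (a ++ b) x = fw f a (fw f b x)
  | [], _, _ => rfl
  | y :: a, b, x => by simp [fw, fw_append f a b x]

lemma skew_iterate (f : Y → X → X) (q : (ℕ → Y) × X) (m : ℕ) :
    (skew f)^[m] q = (fun t => q.1 (t + m), fw f ((List.range m).map q.1).reverse q.2) := by
  induction m with
  | zero => simp [fw]
  | succ m ih =>
    rw [Function.iterate_succ_apply', ih]
    refine Prod.ext ?_ ?_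
    · funext t
      have h : t + 1 + m = t + (m + 1) := by omega
      simp [skew, h]
    · simp [skew, List.range_succ, fw_append, fw]

lemma le_foldr_max {a : ℝ} : ∀ {l : List ℝ}, a ∈ l → a ≤ l.foldr max 0
  | b :: l, h => by
    rcases List.mem_cons.1 h with rfl | h
    · exact le_max_left _ _
    · exact le_trans (le_foldr_max h) (le_max_right _ _)

lemma dB_lt [PseudoMetricSpace X] {f : Y → X → X} {w u : List Y} {x z : X} {ε : ℝ}
    (hx : dB f w x z < ε) (hu : u <+: w) :
    dist (fw f u.reverse x) (fw f u.reverse z) < ε := by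
  refine lt_of_le_of_lt ?_ hx
  exact le_foldr_max (List.mem_map_of_mem ((List.mem_inits _ _).2 hu))

lemma geo_eq (a : ℝ) : (fun j : ℕ => a / 2 ^ (j + 1)) = fun j : ℕ => a / 2 / 2 ^ j := by
  funext j; rw [div_div, ← pow_succ']

lemma tsum_const_geo (a : ℝ) : ∑' j : ℕ, a / 2 ^ (j + 1) = a := by
  rw [show (fun j : ℕ => a / 2 ^ (j + 1)) = fun j : ℕ => a / 2 / 2 ^ j from geo_eq a]
  exact tsum_geometric_two' a

lemma summable_const_geo (a : ℝ) : Summable (fun j : ℕ => a / 2 ^ (j + 1)) := by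
  rw [geo_eq a]; exact summable_geometric_two' a

lemma summable_term [PseudoMetricSpace Y] [CompactSpace Y] (ω ω' : ℕ → Y) :
    Summable (fun j : ℕ => dist (ω j) (ω' j) / 2 ^ (j + 1)) := by
  have hgeo : Summable (fun j : ℕ => Metric.diam (Set.univ : Set Y) / 2 ^ (j + 1)) :=
    summable_const_geo _
  refine Summable.of_nonneg_of_le (fun j => by positivity) (fun j => ?_) hgeo
  have : dist (ω j) (ω' j) ≤ Metric.diam (Set.univ : Set Y) :=
    Metric.dist_le_diam_of_mem isCompact_univ.isBounded (Set.mem_univ _) (Set.mem_univ _)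
  gcongr

set_option maxHeartbeats 1600000 in
lemma dseq_le [MetricSpace Y] [CompactSpace Y] (ω ω' : ℕ → Y) (L : ℕ)
    (h : ∀ t < L, ω t = ω' t) :
    dseq ω ω' ≤ Metric.diam (Set.univ : Set Y) / 2 ^ L := by
  set C := Metric.diam (Set.univ : Set Y) with hC
  have hsum := summable_term ω ω'
  rw [dseq, ← hsum.sum_add_tsum_nat_add L]
  have h1 : ∑ i ∈ Finset.range L, dist (ω i) (ω' i) / 2 ^ (i + 1) = 0 :=
    Finset.sum_eq_zero (fun i hi => by rw [h i (Finset.mem_range.1 hi)]; simp)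
  rw [h1, zero_add]
  have key : ∀ j : ℕ, dist (ω (j + L)) (ω' (j + L)) / 2 ^ (j + L + 1) ≤ (C / 2 ^ L) / 2 ^ (j + 1) := by
    intro j
    have h2 : ((2:ℝ) ^ L) * 2 ^ (j + 1) = 2 ^ (j + L + 1) := by
      rw [← pow_add]; congr 1; omega
    rw [div_div, h2]
    have : dist (ω (j + L)) (ω' (j + L)) ≤ C :=
      Metric.dist_le_diam_of_mem isCompact_univ.isBounded (Set.mem_univ _) (Set.mem_univ _)
    gcongr
  refine le_trans (Summable.tsum_le_tsum key ((summable_nat_add_iff L).2 hsum)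
    (summable_const_geo _)) (le_of_eq (tsum_const_geo _))

lemma Wcum_succ (wn wp : ℕ → List Y) (j : ℕ) :
    Wcum wn wp (j + 1) = Wcum wn wp j ++ (wn j ++ wp j) := by
  simp [Wcum, List.range_succ]

lemma Wcum_length (wn wp : ℕ → List Y) (j : ℕ) :
    (Wcum wn wp j).length = ∑ l ∈ Finset.range j, ((wn l).length + (wp l).length) := by
  induction j with
  | zero => simp [Wcum]
  | succ j ih => rw [Wcum_succ, Finset.sum_range_succ, ← ih]; simp

lemma Wcum_prefix (wn wp : ℕ → List Y) {j k : ℕ} (h : j ≤ k) :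
    ∃ t, Wcum wn wp j ++ t = Wcum wn wp k := by
  obtain ⟨d, rfl⟩ := Nat.exists_eq_add_of_le h
  induction d with
  | zero => exact ⟨[], by simp⟩
  | succ d ih =>
    obtain ⟨t, ht⟩ := ih (by omega)
    refine ⟨t ++ (wn (j + d) ++ wp (j + d)), ?_⟩
    rw [show j + (d + 1) = (j + d) + 1 by omega, Wcum_succ, ← ht, List.append_assoc]

lemma map_range_getD {α : Type*} (W : List α) (d : α) (m : ℕ) (h : m ≤ W.length) :
    (List.range m).map (fun i => W.getD i d) = W.take m := by
  apply List.ext_getElem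
  · simp; omega
  · intro i h1 h2
    have hi : i < m := by simpa using h1
    have hiW : i < W.length := by omega
    simp [List.getD_eq_getElem?_getD, List.getElem?_eq_getElem hiW]

lemma getD_map_range {α : Type*} (g : ℕ → α) (m s : ℕ) (d : α) (h : s < m) :
    ((List.range m).map g).getD s d = g s := by
  simp [List.getD_eq_getElem?_getD, List.getElem?_map, List.getElem?_range h]

/-- If the free semigroup action `G` has the gluing orbit property, then the skew product
`F(ω,x) = (σω, f_{ω₁} x)` has the gluing orbit property as a single map for the metric `D`. -/
theorem gluing_orbit_skew_product [MetricSpace X] [CompactSpace X] [MetricSpace Y]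
    [CompactSpace Y] (f : Y → X → X) (hf : ∀ y, Continuous (f y))
    (hglue : ∀ ε : ℝ, 0 < ε → ∃ P : ℕ, 0 < P ∧
      ∀ (k : ℕ) (x : ℕ → X) (wn : ℕ → List Y), 1 ≤ k → (∀ j < k, 0 < (wn j).length) →
        ∃ p : ℕ → ℕ, (∀ j < k, p j ≤ P) ∧
          ∀ wp : ℕ → List Y, (∀ j < k, (wp j).length = p j) →
            (⋂ j ∈ Finset.range k,
              fw f (Wcum wn wp j).reverse ⁻¹' BB f (wn j) (x j) ε).Nonempty) :
    ∀ ε : ℝ, 0 < ε → ∃ P : ℕ, 1 ≤ P ∧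
      ∀ (k : ℕ) (z : ℕ → (ℕ → Y) × X) (n : ℕ → ℕ), 1 ≤ k → (∀ j < k, 0 < n j) →
        ∃ p : ℕ → ℕ, (∀ j < k, p j ≤ P) ∧ ∃ z₀ : (ℕ → Y) × X,
          ∀ j < k, ∀ i < n j,
            Dprod ((skew f)^[(∑ l ∈ Finset.range j, (n l + p l)) + i] z₀)
              ((skew f)^[i] (z j)) < ε := by
  intro ε hε
  set C := Metric.diam (Set.univ : Set Y) with hCdef
  obtain ⟨L, hL⟩ : ∃ L : ℕ, C / 2 ^ L < ε := by
    obtain ⟨L, hL⟩ := pow_unbounded_of_one_lt (C / ε) (by norm_num : (1:ℝ) < 2)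
    refine ⟨L, ?_⟩
    rw [div_lt_iff₀ (by positivity)]
    rw [div_lt_iff₀ hε] at hL
    linarith
  obtain ⟨PG, hPG, hg⟩ := hglue ε hε
  refine ⟨PG + L, by omega, ?_⟩
  intro k z n hk hn
  set wn : ℕ → List Y := fun j => (List.range (n j + L)).map (z j).1 with hwn
  have hlenwn : ∀ l, (wn l).length = n l + L := fun l => by simp [hwn]
  obtain ⟨p, hp, hbow⟩ := hg k (fun j => (z j).2) wn hk
    (fun j hj => by rw [hlenwn]; have := hn j hj; omega)
  refine ⟨fun j => p j + L, fun j hj => by show p j + L ≤ PG + L; have := hp j hj; omega, ?_⟩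
  set y₀ := (z 0).1 0 with hy₀
  set wp : ℕ → List Y := fun j => List.replicate (p j) y₀ with hwp
  have hlenwp : ∀ l, (wp l).length = p l := fun l => by simp [hwp]
  obtain ⟨x₀, hx₀⟩ := hbow wp (fun j _ => hlenwp j)
  set W := Wcum wn wp k with hWdef
  set ω₀ : ℕ → Y := fun m => W.getD m y₀ with hω₀
  refine ⟨(ω₀, x₀), ?_⟩
  intro j hj i hi
  have hnj := hn j hj
  beta_reduce
  set M : ℕ → ℕ := fun j' => ∑ l ∈ Finset.range j', (n l + (p l + L)) with hM
  have hWlen : ∀ j', (Wcum wn wp j').length = M j' := by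
    intro j'
    rw [Wcum_length, hM]
    exact Finset.sum_congr rfl fun l _ => by rw [hlenwn, hlenwp]; omega
  have hjk : j + 1 ≤ k := hj
  obtain ⟨r, hr⟩ := Wcum_prefix wn wp hjk
  have hWsplit : W = Wcum wn wp j ++ (wn j ++ (wp j ++ r)) := by
    rw [hWdef, ← hr, Wcum_succ]
    simp [List.append_assoc]
  have hWlenk : W.length = M k := hWlen k
  have hMle : M (j + 1) ≤ M k := Finset.sum_le_sum_of_subset (Finset.range_subset_range.2 hjk)
  have hMsucc : M (j + 1) = M j + (n j + (p j + L)) := Finset.sum_range_succ _ _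
  have htake : ∀ s, s ≤ n j + L →
      (List.range (M j + s)).map ω₀ = Wcum wn wp j ++ (wn j).take s := by
    intro s hs
    rw [hω₀, map_range_getD W y₀ _ (by omega)]
    rw [hWsplit, ← hWlen j, List.take_append, List.take_of_length_le (Nat.le_add_right _ _), Nat.add_sub_cancel_left,
      List.take_append_of_le_length (by rw [hlenwn]; exact hs)]
  have hletter : ∀ s, s < n j + L → ω₀ (M j + s) = (z j).1 s := by
    intro s hs
    have hslen : s < (wn j).length := by rw [hlenwn]; exact hs
    show W.getD (M j + s) y₀ = (z j).1 s
    rw [hWsplit, ← hWlen j,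
      List.getD_append_right _ _ _ _ (Nat.le_add_right _ _), Nat.add_sub_cancel_left,
      List.getD_append _ _ _ _ hslen, hwn, getD_map_range _ _ _ _ hs]
  have hmem : fw f (Wcum wn wp j).reverse x₀ ∈ BB f (wn j) ((z j).2) ε := by
    have h1 := Set.mem_iInter₂.1 hx₀ j (Finset.mem_range.2 hj)
    exact h1
  have hprefix : (List.range i).map (z j).1 = (wn j).take i := by
    rw [hwn, ← List.map_take, List.take_range, Nat.min_eq_left (by omega)]
  rw [skew_iterate, skew_iterate]
  simp only [Dprod]
  apply max_lt
  · refine lt_of_le_of_lt (dseq_le _ _ L ?_) hL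
    intro t ht
    show ω₀ (t + (M j + i)) = (z j).1 (t + i)
    rw [show t + (M j + i) = M j + (i + t) by omega, show t + i = i + t by omega]
    exact hletter (i + t) (by omega)
  · show dist (fw f ((List.range (M j + i)).map ω₀).reverse x₀)
      (fw f ((List.range i).map (z j).1).reverse (z j).2) < ε
    rw [htake i (by omega), List.reverse_append, fw_append, hprefix, dist_comm]
    exact dB_lt hmem (List.take_prefix _ _)
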